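/- For t ≥ 0, with a = (1−√t)² and b = (1+√t)², the integral ∫_a^b (1/x²)·√((b−x)(x−a)) dx equals 2π·min{1,t}/|1−t|, where the right-hand side is interpreted as +∞ in the case t = 1. -/

import Mathlib

open MeasureTheory Filter Topology
open scoped ENNReal

open Set

lemma mp_alg (a b x s r : ℝ) (hx : x ≠ 0) (hba : b - a ≠ 0) (hs : s ≠ 0) (hr : r ≠ 0)
    (hs2 : s^2 = (b-x)*(x-a)) (hr2 : r^2 = a*b) :
    (-(1 / (2 * s) * ((-1) * (x - a) + (b - x) * 1)) * x - (-s) * 1) / x ^ 2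
      - 1 / (2 * s / (b - a)) * (2 * 1 / (b - a))
      + (a + b) / (2 * r) *
        (1 / (2 * r * s / ((b - a) * x)) *
          (((a + b) * 1 * ((b - a) * x) - ((a + b) * x - 2 * (a * b)) * ((b - a) * 1)) / ((b - a) * x) ^ 2))
      = s / x ^ 2 := by
  have T1 : (-(1 / (2 * s) * ((-1) * (x - a) + (b - x) * 1)) * x - (-s) * 1) / x ^ 2
      = ((a+b)*x - 2*(a*b))/(2*s*x^2) := by
    field_simp
    ring_nf
    linear_combination 2*hs2
  have T3 : (a + b) / (2 * r) *
        (1 / (2 * r * s / ((b - a) * x)) *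
          (((a + b) * 1 * ((b - a) * x) - ((a + b) * x - 2 * (a * b)) * ((b - a) * 1)) / ((b - a) * x) ^ 2))
      = (a+b)/(2*s*x) := by
    field_simp
    ring_nf
    linear_combination (-2*(a+b)) * hr2
  rw [T1, T3]
  field_simp
  ring_nf
  linear_combination (-2) * hs2

lemma mp_key (a b : ℝ) (h0 : 0 < a) (hab : a < b) :
    ∫ x in a..b, Real.sqrt ((b - x) * (x - a)) / x ^ 2
      = Real.pi * ((a + b) / (2 * Real.sqrt (a * b)) - 1) := by
  have hba : (0:ℝ) < b - a := by linarith
  have hb0 : (0:ℝ) < b := by linarith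
  have hsab : 0 < Real.sqrt (a * b) := Real.sqrt_pos.2 (by positivity)
  set c : ℝ := (a + b) / (2 * Real.sqrt (a * b)) with hc
  set S : ℝ → ℝ := fun x => Real.sqrt ((b - x) * (x - a)) with hSdef
  set F : ℝ → ℝ := fun x => -S x / x - Real.arcsin ((2*x - (a+b))/(b-a))
      + c * Real.arcsin (((a+b)*x - 2*(a*b))/((b-a)*x)) with hF
  have Scont : Continuous S := by
    apply Real.continuous_sqrt.comp; continuity
  have hFcont : ContinuousOn F (Icc a b) := by
    have hx0 : ∀ x ∈ Icc a b, x ≠ 0 := fun x hx => by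
      have := hx.1; intro h; rw [h] at this; linarith
    apply ContinuousOn.add
    · apply ContinuousOn.sub
      · exact (Scont.continuousOn.neg).div continuousOn_id hx0
      · exact (Real.continuous_arcsin.comp
          (((continuous_const.mul continuous_id).sub continuous_const).div_const (b-a) : Continuous fun x : ℝ => (2*x - (a+b))/(b-a))).continuousOn
    · refine continuousOn_const.mul (Real.continuous_arcsin.comp_continuousOn ?_)
      refine ContinuousOn.div
        (((continuous_const.mul continuous_id).sub continuous_const).continuousOn : ContinuousOn (fun x : ℝ => (a+b)*x - 2*(a*b)) _)
        ((continuous_const.mul continuous_id).continuousOn) ?_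
      intro x hx
      exact mul_ne_zero hba.ne' (hx0 x hx)
  have hderiv : ∀ x ∈ Ioo a b, HasDerivAt F (Real.sqrt ((b - x) * (x - a)) / x ^ 2) x := by
    intro x hx
    have hxa : a < x := hx.1
    have hxb : x < b := hx.2
    have hx0 : 0 < x := lt_trans h0 hxa
    have hP : 0 < (b - x) * (x - a) := mul_pos (by linarith) (by linarith)
    have hSpos : 0 < S x := Real.sqrt_pos.2 hP
    have hS2 : S x ^ 2 = (b - x) * (x - a) := Real.sq_sqrt hP.le
    have hab2 : Real.sqrt (a * b) ^ 2 = a * b := Real.sq_sqrt (by positivity)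
    have hp : HasDerivAt (fun y => (b - y) * (y - a)) ((-1) * (x - a) + (b - x) * 1) x :=
      (((hasDerivAt_id x).const_sub b).mul ((hasDerivAt_id x).sub_const a))
    have hS : HasDerivAt S (1 / (2 * S x) * ((-1) * (x - a) + (b - x) * 1)) x :=
      (Real.hasDerivAt_sqrt hP.ne').comp x hp
    have h1 : HasDerivAt (fun y => -S y / y)
        (((-(1 / (2 * S x) * ((-1) * (x - a) + (b - x) * 1))) * x - (-S x) * 1) / x ^ 2) x :=
      (hS.neg.div (hasDerivAt_id x) hx0.ne')
    have hu : HasDerivAt (fun y => (2*y - (a+b))/(b-a)) (2 * 1 / (b-a)) x :=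
      (((hasDerivAt_id x).const_mul 2).sub_const (a+b)).div_const (b-a)
    have hu_lt : (2*x - (a+b))/(b-a) < 1 := by
      rw [div_lt_one hba]; linarith
    have hu_gt : -1 < (2*x - (a+b))/(b-a) := by
      rw [lt_div_iff₀ hba]; linarith
    have h2 : HasDerivAt (fun y => Real.arcsin ((2*y - (a+b))/(b-a)))
        (1 / Real.sqrt (1 - ((2*x - (a+b))/(b-a)) ^ 2) * (2 * 1 / (b-a))) x :=
      HasDerivAt.comp (h₂ := Real.arcsin) x (Real.hasDerivAt_arcsin hu_gt.ne' hu_lt.ne) hu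
    have hden : HasDerivAt (fun y => (b-a)*y) ((b-a) * 1) x := (hasDerivAt_id x).const_mul (b-a)
    have hnum : HasDerivAt (fun y => (a+b)*y - 2*(a*b)) ((a+b) * 1) x :=
      (((hasDerivAt_id x).const_mul (a+b)).sub_const (2*(a*b)))
    have hv : HasDerivAt (fun y => ((a+b)*y - 2*(a*b))/((b-a)*y))
        ((((a+b) * 1) * ((b-a)*x) - ((a+b)*x - 2*(a*b)) * ((b-a) * 1)) / ((b-a)*x) ^ 2) x :=
      hnum.div hden (mul_pos hba hx0).ne'
    have hvsq : (((a+b)*x - 2*(a*b))/((b-a)*x)) ^ 2 < 1 := by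
      rw [div_pow, div_lt_one (pow_pos (mul_pos hba hx0) 2)]
      nlinarith [mul_pos (mul_pos (mul_pos h0 hb0) (show (0:ℝ) < b - x by linarith))
        (show (0:ℝ) < x - a by linarith)]
    have hv_lt : ((a+b)*x - 2*(a*b))/((b-a)*x) < 1 := by
      nlinarith [sq_nonneg (((a+b)*x - 2*(a*b))/((b-a)*x) - 1)]
    have hv_gt : -1 < ((a+b)*x - 2*(a*b))/((b-a)*x) := by
      nlinarith [sq_nonneg (((a+b)*x - 2*(a*b))/((b-a)*x) + 1)]
    have h3 : HasDerivAt (fun y => Real.arcsin (((a+b)*y - 2*(a*b))/((b-a)*y)))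
        (1 / Real.sqrt (1 - (((a+b)*x - 2*(a*b))/((b-a)*x)) ^ 2) *
          ((((a+b) * 1) * ((b-a)*x) - ((a+b)*x - 2*(a*b)) * ((b-a) * 1)) / ((b-a)*x) ^ 2)) x :=
      HasDerivAt.comp (h₂ := Real.arcsin) x (Real.hasDerivAt_arcsin hv_gt.ne' hv_lt.ne) hv
    have H := (h1.sub h2).add (h3.const_mul c)
    refine H.congr_deriv ?_
    have hsq1 : Real.sqrt (1 - ((2*x - (a+b))/(b-a)) ^ 2) = 2 * S x / (b - a) := by
      have e : 1 - ((2*x - (a+b))/(b-a)) ^ 2 = (2 * S x / (b - a)) ^ 2 := by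
        rw [div_pow, div_pow, mul_pow, hS2]
        field_simp
        ring
      rw [e, Real.sqrt_sq (div_pos (mul_pos two_pos hSpos) hba).le]
    have hsq2 : Real.sqrt (1 - (((a+b)*x - 2*(a*b))/((b-a)*x)) ^ 2)
        = 2 * Real.sqrt (a*b) * S x / ((b-a)*x) := by
      have e : 1 - (((a+b)*x - 2*(a*b))/((b-a)*x)) ^ 2
          = (2 * Real.sqrt (a*b) * S x / ((b-a)*x)) ^ 2 := by
        rw [div_pow, div_pow, mul_pow (2*Real.sqrt (a*b)) (S x), mul_pow 2 (Real.sqrt (a*b)), hS2, hab2]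
        field_simp
        ring
      rw [e, Real.sqrt_sq (div_pos (mul_pos (mul_pos two_pos hsab) hSpos)
        (mul_pos hba hx0)).le]
    rw [hsq1, hsq2, hc]
    exact (mp_alg a b x (S x) (Real.sqrt (a*b)) hx0.ne' hba.ne' hSpos.ne' hsab.ne'
      hS2 hab2)
  have hint : IntervalIntegrable (fun x => Real.sqrt ((b - x) * (x - a)) / x ^ 2) volume a b := by
    apply ContinuousOn.intervalIntegrable
    rw [uIcc_of_le hab.le]
    refine ContinuousOn.div Scont.continuousOn (continuousOn_pow 2) ?_
    intro x hx
    exact pow_ne_zero 2 (ne_of_gt (lt_of_lt_of_le h0 hx.1))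
  have hFTC := intervalIntegral.integral_eq_sub_of_hasDeriv_right_of_le hab.le hFcont
    (fun x hx => (hderiv x hx).hasDerivWithinAt) hint
  rw [hFTC, hF]
  have hSa : S a = 0 := by simp [hSdef]
  have hSb : S b = 0 := by simp [hSdef]
  have hub : (2*b - (a+b))/(b-a) = 1 := by rw [div_eq_one_iff_eq hba.ne']; ring
  have hua : (2*a - (a+b))/(b-a) = -1 := by rw [div_eq_iff hba.ne']; ring
  have hvb : ((a+b)*b - 2*(a*b))/((b-a)*b) = 1 := by
    rw [div_eq_one_iff_eq (mul_pos hba hb0).ne']; ring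
  have hva : ((a+b)*a - 2*(a*b))/((b-a)*a) = -1 := by
    rw [div_eq_iff (mul_pos hba h0).ne']; ring
  simp only [hSa, hSb, hub, hua, hvb, hva, Real.arcsin_one, Real.arcsin_neg_one,
    neg_zero, zero_div]

  ring

/-- For `t ≥ 0`, with `a = (1-√t)²` and `b = (1+√t)²`,
`∫_a^b (1/x²)√((b-x)(x-a)) dx = 2π min{1,t}/|1-t|`, the right-hand side being `+∞` when
`t = 1`. -/
theorem marchenko_pastur_inverse_moment_integral
    (t : ℝ) (ht : 0 ≤ t) (a b : ℝ)
    (ha : a = (1 - Real.sqrt t) ^ 2) (hb : b = (1 + Real.sqrt t) ^ 2) :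
    ∫⁻ x in Set.Ioo a b, ENNReal.ofReal (Real.sqrt ((b - x) * (x - a)) / x ^ 2)
      = if t = 1 then ⊤ else ENNReal.ofReal (2 * Real.pi * min 1 t / |1 - t|) := by
  by_cases h1 : t = 1
  · subst h1
    rw [if_pos rfl]
    have ha' : a = 0 := by rw [ha, Real.sqrt_one]; ring
    have hb' : b = 4 := by rw [hb, Real.sqrt_one]; norm_num
    subst ha'; subst hb'
    rw [eq_top_iff]
    have hinf : ∫⁻ x in Set.Ioo (0:ℝ) 1, ENNReal.ofReal x⁻¹ = ⊤ := by
      by_contra hne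
      have hnn : 0 ≤ᵐ[volume.restrict (Set.Ioo (0:ℝ) 1)] fun x : ℝ => x⁻¹ :=
        (ae_restrict_iff' measurableSet_Ioo).2 (ae_of_all _ fun x hx => inv_nonneg.2 hx.1.le)
      have hfin : HasFiniteIntegral (fun x : ℝ => x⁻¹) (volume.restrict (Set.Ioo (0:ℝ) 1)) :=
        (hasFiniteIntegral_iff_ofReal hnn).2 (lt_top_iff_ne_top.2 hne)
      have hio : IntegrableOn (fun x : ℝ => x⁻¹) (Set.Ioo (0:ℝ) 1) :=
        ⟨measurable_inv.aestronglyMeasurable, hfin⟩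
      have hio' : IntegrableOn (fun x : ℝ => x ^ (-1 : ℝ)) (Set.Ioo (0:ℝ) 1) :=
        hio.congr_fun (fun x _ => (Real.rpow_neg_one x).symm) measurableSet_Ioo
      rw [intervalIntegral.integrableOn_Ioo_rpow_iff one_pos] at hio'
      norm_num at hio'
    calc ⊤ = ∫⁻ x in Set.Ioo (0:ℝ) 1, ENNReal.ofReal x⁻¹ := hinf.symm
      _ ≤ ∫⁻ x in Set.Ioo (0:ℝ) 1,
            ENNReal.ofReal (Real.sqrt ((4 - x) * (x - 0)) / x ^ 2) := by
          refine setLIntegral_mono ?_ ?_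
          · exact ENNReal.measurable_ofReal.comp
              ((Real.continuous_sqrt.comp
                  ((continuous_const.sub continuous_id).mul
                    (continuous_id.sub continuous_const))).measurable.div
                (measurable_id.pow_const 2))
          · intro x hx
            refine ENNReal.ofReal_le_ofReal ?_
            have hx0 : 0 < x := hx.1
            have hle : x ≤ Real.sqrt ((4 - x) * (x - 0)) := by
              rw [show ((4 - x) * (x - 0) : ℝ) = x ^ 2 + (4 - 2*x) * x by ring]
              nlinarith [Real.sq_sqrt (show (0:ℝ) ≤ x ^ 2 + (4 - 2*x) * x by nlinarith [hx.2]),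
                Real.sqrt_nonneg (x ^ 2 + (4 - 2*x) * x), hx.2]
            calc x⁻¹ = x / x ^ 2 := by
                  rw [eq_div_iff (pow_ne_zero 2 hx0.ne')]; field_simp
              _ ≤ Real.sqrt ((4 - x) * (x - 0)) / x ^ 2 := by gcongr
      _ ≤ ∫⁻ x in Set.Ioo (0:ℝ) 4,
            ENNReal.ofReal (Real.sqrt ((4 - x) * (x - 0)) / x ^ 2) :=
          lintegral_mono_set (Set.Ioo_subset_Ioo le_rfl (by norm_num))
  · rw [if_neg h1]
    by_cases h0 : t = 0
    · subst h0
      have ha' : a = 1 := by rw [ha, Real.sqrt_zero]; ring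
      have hb' : b = 1 := by rw [hb, Real.sqrt_zero]; ring
      subst ha'; subst hb'
      rw [Set.Ioo_self]
      simp
    · have ht0 : 0 < t := lt_of_le_of_ne ht (Ne.symm h0)
      have hs0 : 0 < Real.sqrt t := Real.sqrt_pos.2 ht0
      have hst : Real.sqrt t ^ 2 = t := Real.sq_sqrt ht
      have hsne1 : Real.sqrt t ≠ 1 := fun h => h1 (by rw [← hst, h]; norm_num)
      have ha0 : 0 < a := by
        rw [ha]; exact pow_two_pos_of_ne_zero (sub_ne_zero.2 (Ne.symm hsne1))
      have hab : a < b := by rw [ha, hb]; nlinarith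
      have hb0 : 0 < b := lt_trans ha0 hab
      have hcont : ContinuousOn (fun x => Real.sqrt ((b - x) * (x - a)) / x ^ 2)
          (Set.Icc a b) := by
        refine ContinuousOn.div (Real.continuous_sqrt.comp (by continuity)).continuousOn
          (continuousOn_pow 2) ?_
        intro x hx
        exact pow_ne_zero 2 (ne_of_gt (lt_of_lt_of_le ha0 hx.1))
      have hInt : IntegrableOn (fun x => Real.sqrt ((b - x) * (x - a)) / x ^ 2)
          (Set.Ioc a b) :=
        (hcont.integrableOn_Icc).mono_set Set.Ioc_subset_Icc_self
      have hnn : 0 ≤ᵐ[volume.restrict (Set.Ioc a b)]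
          fun x => Real.sqrt ((b - x) * (x - a)) / x ^ 2 :=
        ae_of_all _ fun x => div_nonneg (Real.sqrt_nonneg _) (sq_nonneg _)
      rw [setLIntegral_congr (Ioo_ae_eq_Ioc : Set.Ioo a b =ᵐ[volume] Set.Ioc a b),
        ← ofReal_integral_eq_lintegral_ofReal hInt hnn,
        ← intervalIntegral.integral_of_le hab.le, mp_key a b ha0 hab]
      congr 1
      have habm : a * b = (1 - t) ^ 2 := by rw [ha, hb]; linear_combination (Real.sqrt t ^ 2 + t - 2) * hst
      have hsab : Real.sqrt (a * b) = |1 - t| := by rw [habm, Real.sqrt_sq_eq_abs]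
      have hsum : a + b = 2 * (1 + t) := by rw [ha, hb]; linear_combination 2 * hst
      rw [hsum, hsab]
      rcases lt_or_gt_of_ne h1 with hlt | hgt
      · rw [abs_of_pos (by linarith), min_eq_right hlt.le]
        have h2 : 1 - t ≠ 0 := by intro h; apply h1; linarith
        field_simp
        ring
      · rw [abs_of_neg (by linarith), min_eq_left hgt.le]
        have h2 : t - 1 ≠ 0 := by intro h; apply h1; linarith
        rw [neg_sub]
        field_simp
        ring
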